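/- For $\alpha > -1/2$, $T > 0$, and $i \ge 0$, the Legendre coefficients $F_i^\alpha = \int_0^T t^\alpha \hat P(i,t)\,dt$ satisfy the recurrence $F_{i+1}^\alpha = \sqrt{\frac{2i+3}{2i+1}}\,\frac{\alpha - i}{\alpha + i + 2}\, F_i^\alpha$, with $F_0^\alpha = \frac{T^\alpha\sqrt{T}}{\alpha+1}$. -/

import Mathlib

open Real

noncomputable def legendreP (i : ℕ) (x : ℝ) : ℝ :=
  (1 / (2 ^ i * (Nat.factorial i))) * iteratedDeriv i (fun y : ℝ => (y ^ 2 - 1) ^ i) x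

noncomputable def legendreHat (T : ℝ) (i : ℕ) (t : ℝ) : ℝ :=
  Real.sqrt ((2 * i + 1) / T) * legendreP i (2 * t / T - 1)

/-- Legendre coefficient of the power function `t ↦ t^α` on `[0,T]`. -/
noncomputable def F (T α : ℝ) (i : ℕ) : ℝ := ∫ t in (0:ℝ)..T, t ^ α * legendreHat T i t

open Polynomial MeasureTheory intervalIntegral Set Filter Topology Nat


lemma iteratedDeriv_polyeval (P : Polynomial ℝ) (n : ℕ) :
    iteratedDeriv n (fun t => P.eval t) = fun t => (Polynomial.derivative^[n] P).eval t := by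
  induction n with
  | zero => simp
  | succ n ih =>
    rw [iteratedDeriv_succ, ih]
    funext t
    rw [Function.iterate_succ_apply']
    exact (Polynomial.hasDerivAt _ t).deriv

lemma iteratedDeriv_polyeval_affine (P : Polynomial ℝ) (c a b : ℝ) (n : ℕ) :
    iteratedDeriv n (fun t => c * P.eval (a * t + b))
      = fun t => c * a ^ n * (Polynomial.derivative^[n] P).eval (a * t + b) := by
  induction n generalizing P c with
  | zero => funext t; simp
  | succ n ih =>
    rw [iteratedDeriv_succ']
    have hd : deriv (fun t => c * P.eval (a * t + b))
        = fun t => (c * a) * (Polynomial.derivative P).eval (a * t + b) := by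
      funext t
      have h1 : HasDerivAt (fun t : ℝ => a * t + b) a t := by
        simpa using ((hasDerivAt_id t).const_mul a).add_const b
      have h2 := ((Polynomial.hasDerivAt P (a * t + b)).comp t h1).const_mul c
      exact h2.deriv.trans (by ring)
    rw [hd, ih]
    funext t
    rw [Function.iterate_succ_apply]
    ring

lemma deriv_iter_factor (T : ℝ) (i : ℕ) : ∀ k, k ≤ i →
    ∃ p : Polynomial ℝ, Polynomial.derivative^[k] ((X * (X - C T)) ^ i)
      = X ^ (i - k) * (X - C T) ^ (i - k) * p := by
  intro k
  induction k with
  | zero => intro _; exact ⟨1, by simp [mul_pow]⟩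
  | succ k ih =>
    intro hk
    obtain ⟨p, hp⟩ := ih (by omega)
    set m := i - (k + 1) with hm
    have hm1 : i - k = m + 1 := by omega
    refine ⟨C ((m : ℝ) + 1) * ((X - C T) * p + X * p) + X * (X - C T) * Polynomial.derivative p, ?_⟩
    rw [Function.iterate_succ_apply', hp, hm1]
    simp [Polynomial.derivative_mul, Polynomial.derivative_pow]
    ring


lemma beta_closed (T : ℝ) (hT : 0 < T) : ∀ (i : ℕ) (α : ℝ), -1 < α →
    ∫ t in (0:ℝ)..T, t ^ α * (T - t) ^ i
      = (i ! : ℝ) * T ^ (α + i + 1) / ∏ k ∈ Finset.range (i + 1), (α + k + 1) := by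
  intro i
  induction i with
  | zero =>
    intro α hα
    simp only [pow_zero, mul_one, Nat.factorial_zero, Nat.cast_one, Nat.cast_zero,
      Finset.prod_range_one]
    rw [integral_rpow (Or.inl hα), Real.zero_rpow (by linarith : α + 1 ≠ 0)]
    norm_num
  | succ i ih =>
    intro α hα
    have hα1 : α + 1 ≠ 0 := by linarith
    set g : ℝ → ℝ := fun t => t ^ (α + 1) / (α + 1) * (T - t) ^ (i + 1) with hg
    set f' : ℝ → ℝ := fun t =>
      t ^ α * (T - t) ^ (i + 1) - ((i : ℝ) + 1) / (α + 1) * (t ^ (α + 1) * (T - t) ^ i) with hf'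
    have h1 : IntervalIntegrable (fun t : ℝ => t ^ α * (T - t) ^ (i + 1)) volume 0 T :=
      (intervalIntegrable_rpow' hα).mul_continuousOn (by fun_prop)
    have h2 : IntervalIntegrable (fun t : ℝ => t ^ (α + 1) * (T - t) ^ i) volume 0 T :=
      (intervalIntegrable_rpow' (by linarith)).mul_continuousOn (by fun_prop)
    have hint : IntervalIntegrable f' volume 0 T := h1.sub (h2.const_mul _)
    have hderiv : ∀ t ∈ Ioo (0:ℝ) T, HasDerivAt g (f' t) t := by
      intro t ht
      have ha : HasDerivAt (fun t : ℝ => t ^ (α + 1) / (α + 1)) (t ^ α) t := by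
        have := (Real.hasDerivAt_rpow_const (x := t) (p := α + 1)
          (Or.inl ht.1.ne')).div_const (α + 1)
        exact this.congr_deriv (by rw [add_sub_cancel_right]; field_simp)
      have hb : HasDerivAt (fun t : ℝ => (T - t) ^ (i + 1))
          (-(((i : ℝ) + 1) * (T - t) ^ i)) t := by
        have h0 : HasDerivAt (fun t : ℝ => T - t) (-1) t := by
          exact (hasDerivAt_id' t).const_sub T
        have := h0.pow (i + 1)
        exact this.congr_deriv (by rw [Nat.add_sub_cancel]; push_cast; ring)
      have := ha.mul hb
      refine this.congr_deriv ?_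
      simp only [hf']
      field_simp
      ring
    have ha0 : Tendsto g (𝓝[>] (0:ℝ)) (𝓝 0) := by
      have hc : ContinuousAt g 0 := by
        apply ContinuousAt.mul
        · exact (Real.continuousAt_rpow_const 0 (α + 1) (Or.inr (by linarith))).div_const _
        · fun_prop
      have h0 : g 0 = 0 := by simp [hg, Real.zero_rpow hα1]
      simpa [h0] using hc.continuousWithinAt.tendsto
    have hbT : Tendsto g (𝓝[<] T) (𝓝 0) := by
      have hc : ContinuousAt g T := by
        apply ContinuousAt.mul
        · exact (Real.continuousAt_rpow_const T (α + 1) (Or.inl hT.ne')).div_const _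
        · fun_prop
      have h0 : g T = 0 := by simp [hg]
      simpa [h0] using hc.continuousWithinAt.tendsto
    have key : ∫ t in (0:ℝ)..T, f' t = 0 - 0 :=
      integral_eq_sub_of_hasDerivAt_of_tendsto hT hderiv hint ha0 hbT
    have key2 : ∫ t in (0:ℝ)..T, t ^ α * (T - t) ^ (i + 1)
        = ((i : ℝ) + 1) / (α + 1) * ∫ t in (0:ℝ)..T, t ^ (α + 1) * (T - t) ^ i := by
      have := intervalIntegral.integral_sub h1 (h2.const_mul (((i : ℝ) + 1) / (α + 1)))
      rw [hf'] at key
      rw [this] at key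
      rw [intervalIntegral.integral_const_mul] at key
      linarith [key]
    rw [key2, ih (α + 1) (by linarith)]
    have hprod : ∀ k : ℕ, k ∈ Finset.range (i + 1) → (α + 1 + k + 1) = (α + (k + 1 : ℕ) + 1) := by
      intro k _; push_cast; ring
    rw [Finset.prod_congr rfl hprod]
    have hsplit : ∏ k ∈ Finset.range (i + 2), (α + k + 1)
        = (∏ k ∈ Finset.range (i + 1), (α + (k + 1 : ℕ) + 1)) * (α + (0 : ℕ) + 1) := by
      exact Finset.prod_range_succ' (fun k : ℕ => α + k + 1) (i + 1)
    have hpos : (0:ℝ) < ∏ k ∈ Finset.range (i + 1), (α + (k + 1 : ℕ) + 1) := by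
      apply Finset.prod_pos
      intro k _
      push_cast
      linarith [Nat.cast_nonneg (α := ℝ) k]
    have hTpow : T ^ (α + 1 + i + 1) = T ^ (α + (i + 1 : ℕ) + 1) := by
      congr 1
      push_cast
      ring
    rw [hTpow, hsplit, Nat.factorial_succ]
    push_cast
    have hP : ∏ k ∈ Finset.range (i + 1), (α + ((k:ℝ) + 1) + 1) ≠ 0 := by
      have := hpos.ne'; push_cast at this; exact this
    field_simp
    ring_nf
    have hα2 : (1:ℝ) + α ≠ 0 := by linarith
    field_simp
    ring

lemma ibp_step (T α : ℝ) (hT : 0 < T) (hα : -1 < α) (i j : ℕ) (hj : j < i) :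
    (∫ t in (0:ℝ)..T, t ^ (α - j) * (Polynomial.derivative^[i - j] ((X * (X - C T)) ^ i)).eval t)
      = -(α - j) * ∫ t in (0:ℝ)..T,
          t ^ (α - (j + 1 : ℕ)) *
            (Polynomial.derivative^[i - (j + 1)] ((X * (X - C T)) ^ i)).eval t := by
  obtain ⟨p, hp⟩ := deriv_iter_factor T i (i - (j + 1)) (by omega)
  obtain ⟨q, hq⟩ := deriv_iter_factor T i (i - j) (by omega)
  have e1 : i - (i - (j + 1)) = j + 1 := by omega
  have e2 : i - (i - j) = j := by omega
  rw [e1] at hp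
  rw [e2] at hq
  set Q := Polynomial.derivative^[i - (j + 1)] ((X * (X - C T)) ^ i) with hQdef
  have hQ' : Polynomial.derivative Q = Polynomial.derivative^[i - j] ((X * (X - C T)) ^ i) := by
    rw [hQdef, show i - j = (i - (j + 1)) + 1 from by omega, Function.iterate_succ_apply']
  set g : ℝ → ℝ := fun t => t ^ (α - j) * Q.eval t with hg
  set f' : ℝ → ℝ := fun t =>
    (α - j) * (t ^ (α - j - 1) * Q.eval t)
      + t ^ (α - j) * (Polynomial.derivative Q).eval t with hf'
  have hw1 : IntervalIntegrable (fun t : ℝ => t ^ (α - j - 1) * Q.eval t) volume 0 T := by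
    have base : IntervalIntegrable
        (fun t : ℝ => t ^ α * ((t - T) ^ (j + 1) * p.eval t)) volume 0 T :=
      (intervalIntegrable_rpow' hα).mul_continuousOn (by fun_prop)
    rw [intervalIntegrable_iff, uIoc_of_le hT.le] at base ⊢
    apply base.congr_fun _ measurableSet_Ioc
    intro t ht
    have hkey : t ^ (α - (j : ℝ) - 1) * t ^ (j + 1 : ℕ) = t ^ α := by
      rw [← Real.rpow_natCast t (j + 1), ← Real.rpow_add ht.1]
      congr 1
      push_cast
      ring
    rw [hp]
    simp only [Polynomial.eval_mul, Polynomial.eval_pow, Polynomial.eval_X, Polynomial.eval_sub,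
      Polynomial.eval_C]
    rw [← hkey]
    ring
  have hw2 : IntervalIntegrable
      (fun t : ℝ => t ^ (α - j) * (Polynomial.derivative Q).eval t) volume 0 T := by
    have base : IntervalIntegrable
        (fun t : ℝ => t ^ α * ((t - T) ^ j * q.eval t)) volume 0 T :=
      (intervalIntegrable_rpow' hα).mul_continuousOn (by fun_prop)
    rw [intervalIntegrable_iff, uIoc_of_le hT.le] at base ⊢
    apply base.congr_fun _ measurableSet_Ioc
    intro t ht
    have hkey : t ^ (α - (j : ℝ)) * t ^ (j : ℕ) = t ^ α := by
      rw [← Real.rpow_natCast t j, ← Real.rpow_add ht.1]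
      congr 1
      ring
    rw [hQ', hq]
    simp only [Polynomial.eval_mul, Polynomial.eval_pow, Polynomial.eval_X, Polynomial.eval_sub,
      Polynomial.eval_C]
    rw [← hkey]
    ring
  have hint : IntervalIntegrable f' volume 0 T := (hw1.const_mul _).add hw2
  have hderiv : ∀ t ∈ Ioo (0:ℝ) T, HasDerivAt g (f' t) t := by
    intro t ht
    have h1 := Real.hasDerivAt_rpow_const (x := t) (p := α - j) (Or.inl ht.1.ne')
    have h2 := h1.mul (Polynomial.hasDerivAt Q t)
    exact h2.congr_deriv (by simp only [hf']; ring)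
  have htend : Tendsto (fun t : ℝ => t ^ (α + 1) * ((t - T) ^ (j + 1) * p.eval t))
      (𝓝[>] (0:ℝ)) (𝓝 0) := by
    have hc : ContinuousAt (fun t : ℝ => t ^ (α + 1) * ((t - T) ^ (j + 1) * p.eval t)) 0 := by
      apply ContinuousAt.mul
      · exact Real.continuousAt_rpow_const 0 (α + 1) (Or.inr (by linarith))
      · fun_prop
    have h0 : (0:ℝ) ^ (α + 1) * (((0:ℝ) - T) ^ (j + 1) * p.eval 0) = 0 := by
      rw [Real.zero_rpow (by linarith : α + 1 ≠ 0)]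
      ring
    have h2 := (hc.continuousWithinAt (s := Ioi (0:ℝ))).tendsto
    simpa [Real.zero_rpow (show α + 1 ≠ 0 by linarith)] using h2
  have hev : (fun t : ℝ => t ^ (α + 1) * ((t - T) ^ (j + 1) * p.eval t)) =ᶠ[𝓝[>] (0:ℝ)] g := by
    filter_upwards [self_mem_nhdsWithin] with t ht
    have ht0 : (0:ℝ) < t := ht
    have hkey : t ^ (α - (j : ℝ)) * t ^ (j + 1 : ℕ) = t ^ (α + 1) := by
      rw [← Real.rpow_natCast t (j + 1), ← Real.rpow_add ht0]
      congr 1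
      push_cast
      ring
    simp only [hg]
    rw [hp]
    simp only [Polynomial.eval_mul, Polynomial.eval_pow, Polynomial.eval_X, Polynomial.eval_sub,
      Polynomial.eval_C]
    rw [← hkey]
    ring
  have ha0 : Tendsto g (𝓝[>] (0:ℝ)) (𝓝 0) := Filter.Tendsto.congr' hev htend
  have hbT : Tendsto g (𝓝[<] T) (𝓝 0) := by
    have hc : ContinuousAt g T := by
      apply ContinuousAt.mul
      · exact Real.continuousAt_rpow_const T (α - j) (Or.inl hT.ne')
      · fun_prop
    have h0 : g T = 0 := by
      simp only [hg]
      rw [hp]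
      simp
    have h2 := (hc.continuousWithinAt (s := Iio T)).tendsto
    simpa [h0] using h2
  have key := integral_eq_sub_of_hasDerivAt_of_tendsto hT hderiv hint ha0 hbT
  have hsum : ((α - j) * ∫ t in (0:ℝ)..T, t ^ (α - j - 1) * Q.eval t)
      + (∫ t in (0:ℝ)..T, t ^ (α - j) * (Polynomial.derivative Q).eval t) = 0 := by
    rw [← intervalIntegral.integral_const_mul,
      ← intervalIntegral.integral_add (hw1.const_mul _) hw2]
    simpa using key
  have hexp : (α - ((j + 1 : ℕ) : ℝ)) = α - j - 1 := by push_cast; ring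
  rw [← hQ', hexp]
  linarith [hsum]

lemma J_chain (T α : ℝ) (hT : 0 < T) (hα : -1 < α) (i : ℕ) : ∀ j ≤ i,
    (∫ t in (0:ℝ)..T, t ^ α * (Polynomial.derivative^[i] ((X * (X - C T)) ^ i)).eval t)
      = (-1) ^ j * (∏ k ∈ Finset.range j, (α - k)) *
        ∫ t in (0:ℝ)..T, t ^ (α - j) *
          (Polynomial.derivative^[i - j] ((X * (X - C T)) ^ i)).eval t := by
  intro j
  induction j with
  | zero => intro _; simp
  | succ j ih =>
    intro hj
    rw [ih (by omega), ibp_step T α hT hα i j (by omega), Finset.prod_range_succ]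
    push_cast
    ring

lemma J_final (T α : ℝ) (hT : 0 < T) (i : ℕ) :
    (∫ t in (0:ℝ)..T, t ^ (α - i) * (((X : Polynomial ℝ) * (X - C T)) ^ i).eval t)
      = (-1) ^ i * ∫ t in (0:ℝ)..T, t ^ α * (T - t) ^ i := by
  rw [← intervalIntegral.integral_const_mul]
  apply intervalIntegral.integral_congr_ae
  apply Filter.Eventually.of_forall
  intro t ht
  rw [uIoc_of_le hT.le] at ht
  have hkey : t ^ (α - (i : ℝ)) * t ^ (i : ℕ) = t ^ α := by
    rw [← Real.rpow_natCast t i, ← Real.rpow_add ht.1]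
    congr 1
    ring
  simp only [Polynomial.eval_pow, Polynomial.eval_mul, Polynomial.eval_X, Polynomial.eval_sub,
    Polynomial.eval_C]
  rw [mul_pow, show (t - T) ^ i = (-1:ℝ) ^ i * (T - t) ^ i by
    rw [show t - T = -(T - t) by ring, neg_pow]]
  rw [← hkey]
  ring

lemma legendreP_eq_poly (T : ℝ) (hT : 0 < T) (i : ℕ) (t : ℝ) :
    legendreP i (2 * t / T - 1)
      = (1 / ((i ! : ℝ) * T ^ i)) *
        (Polynomial.derivative^[i] ((X * (X - C T)) ^ i)).eval t := by
  set H : Polynomial ℝ := ((X : Polynomial ℝ) ^ 2 - 1) ^ i with hH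
  set PlT : Polynomial ℝ := (X * (X - C T)) ^ i with hPlT
  have hHy : (fun y : ℝ => (y ^ 2 - 1) ^ i) = fun y => H.eval y := by
    funext y; simp [hH]
  have h3 : (fun t : ℝ => PlT.eval t)
      = fun t => ((T ^ 2 / 4) ^ i) * H.eval ((2 / T) * t + (-1)) := by
    funext s
    simp only [hPlT, hH, Polynomial.eval_pow, Polynomial.eval_mul, Polynomial.eval_X,
      Polynomial.eval_sub, Polynomial.eval_C, Polynomial.eval_one]
    rw [← mul_pow]
    congr 1
    field_simp
    ring
  have h1 := iteratedDeriv_polyeval PlT i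
  rw [h3, iteratedDeriv_polyeval_affine] at h1
  -- h1 : (fun t => (T^2/4)^i * (2/T)^i * (D^i H).eval ((2/T)*t + -1)) = fun t => (D^i PlT).eval t
  have h4 := congrFun h1 t
  have hc : ((T ^ 2 / 4) ^ i) * (2 / T) ^ i = (T / 2) ^ i := by
    rw [← mul_pow]
    congr 1
    field_simp
    ring
  have h5 : (2 / T) * t + (-1) = 2 * t / T - 1 := by ring
  rw [hc, h5] at h4
  -- h4 : (T/2)^i * (D^i H).eval (2*t/T - 1) = (D^i PlT).eval t
  have hHd : iteratedDeriv i (fun y : ℝ => (y ^ 2 - 1) ^ i) (2 * t / T - 1)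
      = (Polynomial.derivative^[i] H).eval (2 * t / T - 1) := by
    rw [hHy, iteratedDeriv_polyeval]
  rw [legendreP, hHd]
  have hT2 : ((T : ℝ) / 2) ^ i ≠ 0 := by positivity
  have hfac : ((i ! : ℝ)) ≠ 0 := by positivity
  field_simp at h4 ⊢
  rw [← h4, div_pow]
  field_simp

lemma Fclosed (T α : ℝ) (hT : 0 < T) (hα : -(1/2:ℝ) < α) (i : ℕ) :
    F T α i = Real.sqrt ((2 * i + 1) / T) * T ^ (α + 1) *
      (∏ k ∈ Finset.range i, (α - k)) / ∏ k ∈ Finset.range (i + 1), (α + k + 1) := by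
  have hα1 : (-1:ℝ) < α := by linarith
  have step1 : F T α i = Real.sqrt ((2 * i + 1) / T) * (1 / ((i ! : ℝ) * T ^ i)) *
      ∫ t in (0:ℝ)..T, t ^ α * (Polynomial.derivative^[i] ((X * (X - C T)) ^ i)).eval t := by
    rw [F, ← intervalIntegral.integral_const_mul]
    apply intervalIntegral.integral_congr
    intro t _
    simp only [legendreHat]
    rw [legendreP_eq_poly T hT]
    ring
  have h1 : ((-1:ℝ) ^ i) * ((-1:ℝ) ^ i) = 1 := by rw [← mul_pow]; norm_num
  have comb : (∫ t in (0:ℝ)..T, t ^ α *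
        (Polynomial.derivative^[i] ((X * (X - C T)) ^ i)).eval t)
      = (∏ k ∈ Finset.range i, (α - k)) * ∫ t in (0:ℝ)..T, t ^ α * (T - t) ^ i := by
    rw [J_chain T α hT hα1 i i le_rfl]
    simp only [Nat.sub_self, Function.iterate_zero, id_eq]
    rw [J_final T α hT i]
    rw [show ((-1:ℝ) ^ i * ∏ k ∈ Finset.range i, (α - k)) *
        ((-1:ℝ) ^ i * ∫ t in (0:ℝ)..T, t ^ α * (T - t) ^ i)
      = (((-1:ℝ) ^ i) * ((-1:ℝ) ^ i)) *
        ((∏ k ∈ Finset.range i, (α - k)) * ∫ t in (0:ℝ)..T, t ^ α * (T - t) ^ i) from by ring,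
      h1, one_mul]
  rw [step1, comb, beta_closed T hT i α hα1]
  have hTpow : T ^ (α + i + 1) = T ^ (α + 1) * T ^ (i : ℕ) := by
    rw [← Real.rpow_natCast T i, ← Real.rpow_add hT]
    congr 1; ring
  rw [hTpow]
  have hfac : ((i ! : ℝ)) ≠ 0 := by positivity
  have hTi : (T : ℝ) ^ (i : ℕ) ≠ 0 := by positivity
  have hprod : (∏ k ∈ Finset.range (i + 1), (α + k + 1)) ≠ 0 := by
    apply _root_.ne_of_gt
    apply Finset.prod_pos
    intro k _
    have : (0:ℝ) ≤ k := Nat.cast_nonneg k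
    linarith
  field_simp

theorem legendre_coeff_power_recurrence (T α : ℝ) (hT : 0 < T) (hα : -(1/2 : ℝ) < α) :
    F T α 0 = T ^ α * Real.sqrt T / (α + 1) ∧
    ∀ i : ℕ, F T α (i + 1)
      = Real.sqrt ((2 * i + 3) / (2 * i + 1)) * ((α - i) / (α + i + 2)) * F T α i := by
  constructor
  · have h0 : Real.sqrt ((2 * ((0:ℕ):ℝ) + 1) / T) = 1 / Real.sqrt T := by
      norm_num [Real.sqrt_inv, one_div]
    rw [Fclosed T α hT hα 0, h0]
    simp only [Finset.range_zero, Finset.prod_empty, zero_add, Finset.prod_range_one, Nat.cast_zero,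
      add_zero, mul_one]
    rw [Real.rpow_add_one hT.ne' α]
    have hsT : Real.sqrt T ≠ 0 := by positivity
    have hα1 : α + 1 ≠ 0 := by linarith
    have hT2 : T = Real.sqrt T * Real.sqrt T := (Real.mul_self_sqrt hT.le).symm
    field_simp
    linear_combination (-1 : ℝ) * Real.mul_self_sqrt hT.le
  · intro i
    rw [Fclosed T α hT hα (i + 1), Fclosed T α hT hα i]
    have h2i : (0:ℝ) < 2 * i + 1 := by positivity
    have h2i3 : (0:ℝ) < 2 * i + 3 := by positivity
    have hs : Real.sqrt ((2 * ((i : ℝ) + 1) + 1) / T)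
        = Real.sqrt ((2 * i + 3) / (2 * i + 1)) * Real.sqrt ((2 * i + 1) / T) := by
      rw [← Real.sqrt_mul (by positivity)]
      congr 1
      field_simp
      ring
    have hA : (∏ k ∈ Finset.range (i + 1), (α - k))
        = (∏ k ∈ Finset.range i, (α - k)) * (α - i) := Finset.prod_range_succ _ _
    have hD : (∏ k ∈ Finset.range (i + 2), (α + k + 1))
        = (∏ k ∈ Finset.range (i + 1), (α + k + 1)) * (α + i + 2) := by
      rw [Finset.prod_range_succ]
      push_cast
      ring
    have hprod : (∏ k ∈ Finset.range (i + 1), (α + k + 1)) ≠ 0 := by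
      apply _root_.ne_of_gt
      apply Finset.prod_pos
      intro k _
      have : (0:ℝ) ≤ k := Nat.cast_nonneg k
      linarith
    have hden : α + i + 2 ≠ 0 := by
      have : (0:ℝ) ≤ i := Nat.cast_nonneg i
      linarith
    push_cast
    rw [hs, hA, hD]
    field_simp
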